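/- Let → be a transitive orientation of a graph X and →' a transitive orientation of its complement, and let →'_R be the reversal of →'. Then L1 = → ∪ →' and L2 = → ∪ →'_R are strict linear orders on V(X), and the comparable pairs common to L1 and L2 are exactly the edges of X. -/

import Mathlib

/-- `r` is a transitive orientation of the graph `X`. -/
def IsTransOrientation {V : Type*} (X : SimpleGraph V) (r : V → V → Prop) : Prop :=
  (∀ x y, X.Adj x y ↔ (r x y ∨ r y x)) ∧ (∀ x y, r x y → ¬ r y x) ∧ Transitive r

lemma isTransOrientation_flip {V : Type*} (X : SimpleGraph V) (r : V → V → Prop)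
    (h : IsTransOrientation X r) : IsTransOrientation X (fun a b => r b a) := by
  obtain ⟨h1, h2, h3⟩ := h
  refine ⟨fun x y => ?_, fun x y hxy => h2 y x hxy, fun a b c hab hbc => h3 hbc hab⟩
  rw [h1 x y]; tauto

lemma key_sto {V : Type*} (X : SimpleGraph V) (r r' : V → V → Prop)
    (h : IsTransOrientation X r) (h' : IsTransOrientation Xᶜ r') :
    IsStrictTotalOrder V (fun a b => r a b ∨ r' a b) := by
  obtain ⟨h1, h2, h3⟩ := h
  obtain ⟨h1', h2', h3'⟩ := h'
  have radj : ∀ x y, r x y → X.Adj x y := fun x y hr => (h1 x y).2 (Or.inl hr)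
  have r'nadj : ∀ x y, r' x y → x ≠ y ∧ ¬ X.Adj x y := by
    intro x y hr
    have := (h1' x y).2 (Or.inl hr)
    exact ⟨this.1, this.2⟩
  refine { trichotomous := ?_, irrefl := ?_, trans := ?_ }
  · -- trichotomous
    intro a b
    by_cases hab : a = b
    · exact fun _ _ => hab
    by_cases hadj : X.Adj a b
    · rcases (h1 a b).1 hadj with hr | hr
      · exact fun hn _ => absurd (Or.inl hr) hn
      · exact fun _ hn => absurd (Or.inl hr) hn
    · have : Xᶜ.Adj a b := ⟨hab, hadj⟩
      rcases (h1' a b).1 this with hr | hr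
      · exact fun hn _ => absurd (Or.inr hr) hn
      · exact fun _ hn => absurd (Or.inr hr) hn
  · intro a hr
    rcases hr with hr | hr
    · exact (radj a a hr).ne rfl
    · exact (r'nadj a a hr).1 rfl
  · rintro a b c (hab | hab) (hbc | hbc)
    · exact Or.inl (h3 hab hbc)
    · -- r a b, r' b c
      have hne : a ≠ c := by
        rintro rfl
        exact (r'nadj b a hbc).2 (radj a b hab).symm
      by_cases hadj : X.Adj a c
      · rcases (h1 a c).1 hadj with hr | hr
        · exact Or.inl hr
        · exact absurd (radj c b (h3 hr hab)).symm (r'nadj b c hbc).2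
      · have : Xᶜ.Adj a c := ⟨hne, hadj⟩
        rcases (h1' a c).1 this with hr | hr
        · exact Or.inr hr
        · exact absurd (radj a b hab).symm (r'nadj b a (h3' hbc hr)).2
      -- fallback handled above
    · -- r' a b, r b c
      have hne : a ≠ c := by
        rintro rfl
        exact (r'nadj a b hab).2 (radj b a hbc).symm
      by_cases hadj : X.Adj a c
      · rcases (h1 a c).1 hadj with hr | hr
        · exact Or.inl hr
        · exact absurd (radj b a (h3 hbc hr)).symm (r'nadj a b hab).2
      · have : Xᶜ.Adj a c := ⟨hne, hadj⟩
        rcases (h1' a c).1 this with hr | hr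
        · exact Or.inr hr
        · exact absurd (radj b c hbc).symm (r'nadj c b (h3' hr hab)).2
    · exact Or.inr (h3' hab hbc)

theorem two_linear_orders_from_orientations {V : Type*} (X : SimpleGraph V)
    (r r' : V → V → Prop) (h : IsTransOrientation X r)
    (h' : IsTransOrientation Xᶜ r') :
    IsStrictTotalOrder V (fun a b => r a b ∨ r' a b) ∧
    IsStrictTotalOrder V (fun a b => r a b ∨ r' b a) ∧
    ∀ x y, X.Adj x y ↔
      (((r x y ∨ r' x y) ∧ (r x y ∨ r' y x)) ∨
       ((r y x ∨ r' y x) ∧ (r y x ∨ r' x y))) := by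
  refine ⟨key_sto X r r' h h', key_sto X r _ h (isTransOrientation_flip _ _ h'), ?_⟩
  intro x y
  constructor
  · intro hadj
    rcases (h.1 x y).1 hadj with hr | hr
    · exact Or.inl ⟨Or.inl hr, Or.inl hr⟩
    · exact Or.inr ⟨Or.inl hr, Or.inl hr⟩
  · rintro (⟨h1 | h1, h2 | h2⟩ | ⟨h1 | h1, h2 | h2⟩)
    · exact (h.1 x y).2 (Or.inl h1)
    · exact (h.1 x y).2 (Or.inl h1)
    · exact (h.1 x y).2 (Or.inl h2)
    · exact absurd h1 (h'.2.1 y x h2)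
    · exact (h.1 x y).2 (Or.inr h1)
    · exact (h.1 x y).2 (Or.inr h1)
    · exact (h.1 x y).2 (Or.inr h2)
    · exact absurd h2 (h'.2.1 y x h1)
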